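/- There is a one-to-one correspondence between ordered n-variable words over a finite alphabet A and OVW-trees of dimension n: the map sending an ordered n-variable word w to the set T = { w[u] : u ∈ A^{<n} } (words u of length at most n, with substitution and truncation) is injective; i.e., if two ordered n-variable words generate the same OVW-tree then they are equal. -/

import Mathlib

/-- `w` is an ordered `n`-variable word over `A`: exactly the variables `x_j`,
`j < n`, occur, each at least once, and variable indices occur in nondecreasing
order of position (so the last occurrence of `x_j` precedes the first occurrence
of `x_{j+1}`). -/
def OrderedNVarWord {A : Type*} (n : ℕ) (w : List (A ⊕ ℕ)) : Prop :=
  (∀ j : ℕ, Sum.inr j ∈ w → j < n) ∧ (∀ j < n, Sum.inr j ∈ w) ∧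
    (∀ i i' j j' : ℕ, i < i' → w[i]? = some (Sum.inr j) →
      w[i']? = some (Sum.inr j') → j ≤ j')

/-- The substitution `w[u]` of a word `u` over `A` into a variable word `w`:
replace each occurrence of `x_j` (`j < |u|`) by `u(j)` and truncate just before
the first occurrence of `x_{|u|}`. -/
def substA {A : Type*} [Inhabited A] [DecidableEq A] (w : List (A ⊕ ℕ))
    (u : List A) : List A :=
  (w.takeWhile (fun a => a ≠ Sum.inr u.length)).map (fun a =>
    match a with
    | Sum.inl b => b
    | Sum.inr j => u.getD j default)

set_option linter.unusedSectionVars false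

private lemma tw_get {α : Type*} (p : α → Bool) :
    ∀ (w : List α) (k : ℕ), k < (w.takeWhile p).length →
      ∃ a, w[k]? = some a ∧ p a = true := by
  intro w
  induction w with
  | nil => simp [List.takeWhile]
  | cons a l ih =>
    intro k hk
    rw [List.takeWhile_cons] at hk
    by_cases hpa : p a = true
    · rw [if_pos hpa] at hk
      cases k with
      | zero => exact ⟨a, rfl, hpa⟩
      | succ k =>
        obtain ⟨b, hb, hpb⟩ := ih k (by simpa using hk)
        exact ⟨b, by simpa using hb, hpb⟩
    · rw [if_neg hpa] at hk; simp at hk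

private lemma tw_le {α : Type*} (p : α → Bool) (w : List α) (i : ℕ) (a : α)
    (h : w[i]? = some a) (ha : p a = false) : (w.takeWhile p).length ≤ i := by
  by_contra hlt
  obtain ⟨b, hb, hpb⟩ := tw_get p w i (by omega)
  rw [h] at hb
  simp_all

private lemma tw_gt {α : Type*} (p : α → Bool) :
    ∀ (w : List α) (i : ℕ), i < w.length →
      (∀ k ≤ i, ∀ a, w[k]? = some a → p a = true) → i < (w.takeWhile p).length := by
  intro w
  induction w with
  | nil => simp
  | cons a l ih =>
    intro i hi h
    have hpa : p a = true := h 0 (Nat.zero_le _) a rfl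
    rw [List.takeWhile_cons, if_pos hpa]
    cases i with
    | zero => simp
    | succ i =>
      have := ih i (by simpa using hi) (fun k hk b hb => h (k+1) (by omega) b (by simpa using hb))
      simpa using this

private lemma tw_boundary {α : Type*} (p : α → Bool) :
    ∀ (w : List α), (w.takeWhile p).length < w.length →
      ∃ a, w[(w.takeWhile p).length]? = some a ∧ p a = false := by
  intro w
  induction w with
  | nil => simp
  | cons a l ih =>
    intro hlt
    rw [List.takeWhile_cons] at hlt ⊢
    by_cases hpa : p a = true
    · rw [if_pos hpa] at hlt ⊢
      obtain ⟨b, hb, hpb⟩ := ih (by simpa using hlt)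
      exact ⟨b, by simpa using hb, hpb⟩
    · rw [if_neg hpa]
      exact ⟨a, rfl, by simpa using hpa⟩

section Helpers

variable {A : Type} [DecidableEq A] [Inhabited A]

private def sigmaSub (u : List A) : (A ⊕ ℕ) → A := fun a =>
  match a with
  | Sum.inl b => b
  | Sum.inr j => u.getD j default

private def gIdx (w : List (A ⊕ ℕ)) (m : ℕ) : ℕ :=
  (w.takeWhile (fun a => a ≠ Sum.inr m)).length

private lemma g_lt (w : List (A ⊕ ℕ)) (m : ℕ) (hm : Sum.inr m ∈ w) :
    gIdx w m < w.length := by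
  obtain ⟨i, hi, hget⟩ := List.getElem_of_mem hm
  have := tw_le (fun a => a ≠ Sum.inr m) w i (Sum.inr m)
    (by exact List.getElem?_eq_some_iff.mpr ⟨hi, hget⟩)
    (by simp)
  exact lt_of_le_of_lt this hi

private lemma g_boundary (w : List (A ⊕ ℕ)) (m : ℕ) (hm : Sum.inr m ∈ w) :
    w[gIdx w m]? = some (Sum.inr m) := by
  obtain ⟨a, ha, hpa⟩ := tw_boundary (fun a => a ≠ Sum.inr m) w
    (show (List.takeWhile (fun a => a ≠ Sum.inr m) w).length < w.length from g_lt w m hm)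
  have h2 : a = Sum.inr m := by simpa using hpa
  show w[(List.takeWhile (fun a => a ≠ Sum.inr m) w).length]? = some (Sum.inr m)
  rw [ha, h2]

private lemma g_full {n : ℕ} (w : List (A ⊕ ℕ)) (hw : ∀ j : ℕ, Sum.inr j ∈ w → j < n) :
    gIdx w n = w.length := by
  unfold gIdx
  rw [List.takeWhile_eq_self_iff.mpr]
  intro x hx
  rcases x with b | j
  · simp
  · have := hw j hx
    simp only [ne_eq, decide_eq_true_iff]
    intro h
    injection h with h'
    omega

private lemma g_pos {n : ℕ} {w : List (A ⊕ ℕ)} (h : OrderedNVarWord n w)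
    {i j : ℕ} (hij : w[i]? = some (Sum.inr j)) :
    gIdx w j ≤ i ∧ i < gIdx w (j + 1) := by
  constructor
  · exact tw_le _ w i (Sum.inr j) hij (by simp)
  · apply tw_gt
    · exact (List.getElem?_eq_some_iff.mp hij).1
    · intro k hk a ha
      simp only [ne_eq, decide_eq_true_iff]
      rintro rfl
      rcases Nat.lt_or_eq_of_le hk with hlt | rfl
      · exact absurd (h.2.2 k i (j+1) j hlt ha hij) (by omega)
      · rw [hij] at ha; injection ha with ha'; injection ha' with ha''; omega

private lemma g_step {n : ℕ} {w : List (A ⊕ ℕ)} (h : OrderedNVarWord n w)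
    {m : ℕ} (hm : m < n) : gIdx w m < gIdx w (m + 1) :=
  (g_pos h (g_boundary w m (h.2.1 m hm))).2

private lemma g_strict {n : ℕ} {w : List (A ⊕ ℕ)} (h : OrderedNVarWord n w) :
    ∀ {m m' : ℕ}, m < m' → m' ≤ n → gIdx w m < gIdx w m' := by
  intro m m'
  induction m' with
  | zero => omega
  | succ m' ih =>
    intro hmm' hm'n
    rcases Nat.lt_or_ge m m' with h' | h'
    · exact lt_trans (ih h' (by omega)) (g_step h (by omega))
    · have : m = m' := by omega
      subst this
      exact g_step h (by omega)

private lemma g_mono {n : ℕ} {w : List (A ⊕ ℕ)} (h : OrderedNVarWord n w)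
    {m m' : ℕ} (hmm' : m ≤ m') (hm'n : m' ≤ n) : gIdx w m ≤ gIdx w m' := by
  rcases Nat.lt_or_eq_of_le hmm' with h' | rfl
  · exact le_of_lt (g_strict h h' hm'n)
  · exact le_rfl

private lemma subst_len (w : List (A ⊕ ℕ)) (u : List A) :
    (substA w u).length = gIdx w u.length := by
  simp [substA, gIdx]

private lemma subst_full {n : ℕ} (w : List (A ⊕ ℕ)) (hw : ∀ j : ℕ, Sum.inr j ∈ w → j < n)
    (u : List A) (hu : u.length = n) :
    substA w u = w.map (sigmaSub u) := by
  unfold substA sigmaSub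
  congr 1
  rw [List.takeWhile_eq_self_iff]
  intro x hx
  rcases x with b | j
  · simp
  · have := hw j hx
    simp only [ne_eq, decide_eq_true_iff]
    intro h
    injection h with h'
    omega

end Helpers

theorem stmt_16 {A : Type} [Fintype A] [Inhabited A] [DecidableEq A]
    (hA : 2 ≤ Fintype.card A) (n : ℕ) (w₁ w₂ : List (A ⊕ ℕ))
    (h₁ : OrderedNVarWord n w₁) (h₂ : OrderedNVarWord n w₂)
    (heq : {v | ∃ u : List A, u.length ≤ n ∧ substA w₁ u = v} =
           {v | ∃ u : List A, u.length ≤ n ∧ substA w₂ u = v}) :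
    w₁ = w₂ := by
  have hs : ∀ u : List A, u.length ≤ n →
      ∃ u' : List A, u'.length ≤ n ∧ substA w₂ u' = substA w₁ u := by
    intro u hu
    have h : substA w₁ u ∈ {v | ∃ u : List A, u.length ≤ n ∧ substA w₁ u = v} :=
      ⟨u, hu, rfl⟩
    rw [heq] at h
    exact h
  have hs' : ∀ u : List A, u.length ≤ n →
      ∃ u' : List A, u'.length ≤ n ∧ substA w₁ u' = substA w₂ u := by
    intro u hu
    have h : substA w₂ u ∈ {v | ∃ u : List A, u.length ≤ n ∧ substA w₂ u = v} :=
      ⟨u, hu, rfl⟩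
    rw [← heq] at h
    exact h
  -- the first-occurrence indices agree
  have P1 : ∀ m ≤ n, ∃ m' ≤ n, gIdx w₁ m = gIdx w₂ m' := by
    intro m hm
    obtain ⟨u', hu', he⟩ := hs (List.replicate m default) (by simpa using hm)
    refine ⟨u'.length, hu', ?_⟩
    have h := congrArg List.length he
    rw [subst_len, subst_len] at h
    simpa using h.symm
  have P2 : ∀ m ≤ n, ∃ m' ≤ n, gIdx w₂ m = gIdx w₁ m' := by
    intro m hm
    obtain ⟨u', hu', he⟩ := hs' (List.replicate m default) (by simpa using hm)
    refine ⟨u'.length, hu', ?_⟩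
    have h := congrArg List.length he
    rw [subst_len, subst_len] at h
    simpa using h.symm
  have key : ∀ m, m ≤ n → gIdx w₁ m = gIdx w₂ m := by
    intro m
    induction m using Nat.strong_induction_on with
    | _ m ih =>
      intro hm
      have h12 : gIdx w₂ m ≤ gIdx w₁ m := by
        obtain ⟨m', hm', he⟩ := P1 m hm
        rcases Nat.lt_or_ge m' m with hlt | hge
        · exfalso
          have hih := ih m' hlt (le_trans (le_of_lt hlt) hm)
          have hst := g_strict h₁ hlt hm
          omega
        · rw [he]; exact g_mono h₂ hge hm'
      have h21 : gIdx w₁ m ≤ gIdx w₂ m := by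
        obtain ⟨m', hm', he⟩ := P2 m hm
        rcases Nat.lt_or_ge m' m with hlt | hge
        · exfalso
          have hih := ih m' hlt (le_trans (le_of_lt hlt) hm)
          have hst := g_strict h₂ hlt hm
          omega
        · rw [he]; exact g_mono h₁ hge hm'
      omega
  have hlen : w₁.length = w₂.length := by
    have h := key n le_rfl
    rwa [g_full w₁ h₁.1, g_full w₂ h₂.1] at h
  -- full substitutions correspond to full substitutions
  have full12 : ∀ u : List A, u.length = n →
      ∃ u' : List A, u'.length = n ∧ w₁.map (sigmaSub u) = w₂.map (sigmaSub u') := by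
    intro u hu
    obtain ⟨u', hu', he⟩ := hs u (le_of_eq hu)
    have hl := congrArg List.length he
    rw [subst_len, subst_len, hu] at hl
    have hu'n : u'.length = n := by
      by_contra hne
      have hlt : u'.length < n := lt_of_le_of_ne hu' hne
      have := g_strict h₂ hlt le_rfl
      rw [hl, key n le_rfl] at this
      omega
    refine ⟨u', hu'n, ?_⟩
    rw [← subst_full w₁ h₁.1 u hu, ← subst_full w₂ h₂.1 u' hu'n, he]
  have full21 : ∀ u : List A, u.length = n →
      ∃ u' : List A, u'.length = n ∧ w₂.map (sigmaSub u) = w₁.map (sigmaSub u') := by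
    intro u hu
    obtain ⟨u', hu', he⟩ := hs' u (le_of_eq hu)
    have hl := congrArg List.length he
    rw [subst_len, subst_len, hu] at hl
    have hu'n : u'.length = n := by
      by_contra hne
      have hlt : u'.length < n := lt_of_le_of_ne hu' hne
      have := g_strict h₁ hlt le_rfl
      rw [hl, ← key n le_rfl] at this
      omega
    refine ⟨u', hu'n, ?_⟩
    rw [← subst_full w₂ h₂.1 u hu, ← subst_full w₁ h₁.1 u' hu'n, he]
  apply List.ext_getElem hlen
  intro i hi1 hi2
  have hg1 : w₁[i]? = some w₁[i] := by
    exact List.getElem?_eq_some_iff.mpr ⟨hi1, rfl⟩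
  have hg2 : w₂[i]? = some w₂[i] := by
    exact List.getElem?_eq_some_iff.mpr ⟨hi2, rfl⟩
  rcases hw1 : w₁[i] with a₁ | j₁ <;> rcases hw2 : w₂[i] with a₂ | j₂
  · -- constant / constant
    obtain ⟨u', hu', he⟩ := full12 (List.replicate n default) (by simp)
    have h := congrArg (fun l => l[i]?) he
    simp only [List.getElem?_map] at h
    rw [List.getElem?_eq_getElem hi1, List.getElem?_eq_getElem hi2, hw1, hw2] at h
    simp only [Option.map_some] at h
    injection h with h'
    simpa [sigmaSub] using h'
  · -- constant / variable : contradiction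
    exfalso
    have hj₂n : j₂ < n := h₂.1 j₂ (hw2 ▸ List.getElem_mem hi2)
    obtain ⟨a', ha'⟩ := Fintype.exists_ne_of_one_lt_card (by omega) a₁
    obtain ⟨u, hu, he⟩ := full21 (List.replicate n a') (by simp)
    have h := congrArg (fun l => l[i]?) he
    simp only [List.getElem?_map] at h
    rw [List.getElem?_eq_getElem hi2, List.getElem?_eq_getElem hi1, hw1, hw2] at h
    simp only [Option.map_some] at h
    injection h with h'
    simp only [sigmaSub] at h'
    rw [List.getD_eq_getElem _ _ (by simpa using hj₂n)] at h'
    simp only [List.getElem_replicate] at h'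
    exact ha' h'
  · -- variable / constant : contradiction
    exfalso
    have hj₁n : j₁ < n := h₁.1 j₁ (hw1 ▸ List.getElem_mem hi1)
    obtain ⟨a', ha'⟩ := Fintype.exists_ne_of_one_lt_card (by omega) a₂
    obtain ⟨u, hu, he⟩ := full12 (List.replicate n a') (by simp)
    have h := congrArg (fun l => l[i]?) he
    simp only [List.getElem?_map] at h
    rw [List.getElem?_eq_getElem hi1, List.getElem?_eq_getElem hi2, hw1, hw2] at h
    simp only [Option.map_some] at h
    injection h with h'
    simp only [sigmaSub] at h'
    rw [List.getD_eq_getElem _ _ (by simpa using hj₁n)] at h'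
    simp only [List.getElem_replicate] at h'
    exact ha' h'
  · -- variable / variable
    have hj₁n : j₁ < n := h₁.1 j₁ (hw1 ▸ List.getElem_mem hi1)
    have hj₂n : j₂ < n := h₂.1 j₂ (hw2 ▸ List.getElem_mem hi2)
    have p1 := g_pos h₁ (hw1 ▸ hg1)
    have p2 := g_pos h₂ (hw2 ▸ hg2)
    have hjj : j₁ = j₂ := by
      rcases lt_trichotomy j₁ j₂ with hlt | heq' | hlt
      · exfalso
        have hm := g_mono h₂ (show j₁ + 1 ≤ j₂ by omega) (le_of_lt hj₂n)
        have hk := key (j₁ + 1) (by omega)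
        omega
      · exact heq'
      · exfalso
        have hm := g_mono h₁ (show j₂ + 1 ≤ j₁ by omega) (le_of_lt hj₁n)
        have hk := key (j₂ + 1) (by omega)
        omega
    rw [hjj]
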